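/- (Generalized log-sum inequality) Let a_1, ..., a_n and b_1, ..., b_n be positive real numbers with a = Σ a_i and b = Σ b_i. Then for parameters 0 < k ≤ 1/2 and any r, Σ_{i=1}^n a_i (a_i/b_i)^(r-k) ln_{k,r}(a_i/b_i) ≥ a (a/b)^(r-k) ln_{k,r}(a/b). -/

import Mathlib

/-- Two-parameter deformed logarithm: `ln_{k,r}(x) = (x^(2k) - 1) / (2k x^(r+k))`. -/
noncomputable def lnkr (k r x : ℝ) : ℝ := (x ^ (2 * k) - 1) / (2 * k * x ^ (r + k))

lemma lnkr_key (k r x : ℝ) (hk0 : 0 < k) (hx : 0 < x) :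
    x * (x ^ (r - k) * lnkr k r x) = (x - x ^ (1 - 2 * k)) / (2 * k) := by
  unfold lnkr
  have h1 : x ^ (r - k) = x ^ (r + k) * x ^ (-(2 * k)) := by
    rw [← Real.rpow_add hx]; ring_nf
  have h2 : x ^ (r + k) ≠ 0 := (Real.rpow_pos_of_pos hx _).ne'
  have h3 : x ^ (-(2 * k)) * x ^ (2 * k) = 1 := by
    rw [← Real.rpow_add hx]; simp
  have h4 : x * x ^ (-(2 * k)) = x ^ (1 - 2 * k) := by
    nth_rewrite 1 [← Real.rpow_one x]
    rw [← Real.rpow_add hx]; ring_nf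
  have h2k : (2 * k) ≠ 0 := by positivity
  have h5 : x ^ (r + k) * x ^ (-(2 * k)) * ((x ^ (2 * k) - 1) / (2 * k * x ^ (r + k)))
      = (x ^ (-(2 * k)) * (x ^ (2 * k) - 1)) / (2 * k) := by
    field_simp
  have h6 : x ^ (-(2 * k)) * (x ^ (2 * k) - 1) = 1 - x ^ (-(2 * k)) := by
    rw [mul_sub, h3, mul_one]
  rw [h1, h5, h6, ← h4]
  ring

lemma g_convex (k : ℝ) (hk0 : 0 < k) (hk : k ≤ 1 / 2) :
    ConvexOn ℝ (Set.Ioi 0) (fun x : ℝ => (x - x ^ (1 - 2 * k)) / (2 * k)) := by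
  have h1 : ConcaveOn ℝ (Set.Ici 0) (fun x : ℝ => x ^ (1 - 2 * k)) :=
    Real.concaveOn_rpow (by linarith) (by linarith)
  have h2 : ConvexOn ℝ (Set.Ioi 0) (fun x : ℝ => x - x ^ (1 - 2 * k)) := by
    have := (convexOn_id (convex_Ioi (0:ℝ))).add
      ((h1.subset (Set.Ioi_subset_Ici le_rfl) (convex_Ioi 0)).neg)
    rw [show (fun x : ℝ => x - x ^ (1 - 2 * k)) = id + -fun x => x ^ (1 - 2 * k) from by
      funext x; simp [sub_eq_add_neg]]
    exact this
  have h3 := h2.smul (c := (2 * k)⁻¹) (by positivity)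
  rw [show (fun x : ℝ => (x - x ^ (1 - 2 * k)) / (2 * k)) = fun x => (2 * k)⁻¹ • (x - x ^ (1 - 2 * k)) from by
    funext x; simp [div_eq_inv_mul]]
  exact h3

theorem log_sum_inequality (n : ℕ) (hn : 0 < n) (a b : Fin n → ℝ)
    (ha : ∀ i, 0 < a i) (hb : ∀ i, 0 < b i) (k r : ℝ) (hk0 : 0 < k) (hk : k ≤ 1 / 2) :
    (∑ i, a i) * ((∑ i, a i) / (∑ i, b i)) ^ (r - k) * lnkr k r ((∑ i, a i) / (∑ i, b i)) ≤
      ∑ i, a i * (a i / b i) ^ (r - k) * lnkr k r (a i / b i) := by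
  set A := ∑ i, a i with hA
  set B := ∑ i, b i with hB
  have hApos : 0 < A := Finset.sum_pos (fun i _ => ha i) (Finset.univ_nonempty_iff.2 ⟨⟨0, hn⟩⟩)
  have hBpos : 0 < B := Finset.sum_pos (fun i _ => hb i) (Finset.univ_nonempty_iff.2 ⟨⟨0, hn⟩⟩)
  set g : ℝ → ℝ := fun x => (x - x ^ (1 - 2 * k)) / (2 * k) with hg
  have hterm : ∀ i, a i * (a i / b i) ^ (r - k) * lnkr k r (a i / b i)
      = b i * g (a i / b i) := by
    intro i
    have hx : 0 < a i / b i := div_pos (ha i) (hb i)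
    have := lnkr_key k r (a i / b i) hk0 hx
    have hbi : (b i) ≠ 0 := (hb i).ne'
    calc a i * (a i / b i) ^ (r - k) * lnkr k r (a i / b i)
        = b i * ((a i / b i) * ((a i / b i) ^ (r - k) * lnkr k r (a i / b i))) := by
          field_simp
      _ = b i * g (a i / b i) := by rw [this]
  have hmain : A * (A / B) ^ (r - k) * lnkr k r (A / B) = B * g (A / B) := by
    have hx : 0 < A / B := div_pos hApos hBpos
    have := lnkr_key k r (A / B) hk0 hx
    calc A * (A / B) ^ (r - k) * lnkr k r (A / B)
        = B * ((A / B) * ((A / B) ^ (r - k) * lnkr k r (A / B))) := by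
          field_simp
      _ = B * g (A / B) := by rw [this]
  rw [hmain]
  have hjensen := (g_convex k hk0 hk).map_sum_le (t := Finset.univ)
    (w := fun i => b i / B) (p := fun i => a i / b i)
    (fun i _ => le_of_lt (div_pos (hb i) hBpos))
    (by rw [← Finset.sum_div]; field_simp; exact hB.symm)
    (fun i _ => Set.mem_Ioi.2 (div_pos (ha i) (hb i)))
  have hsum : ∑ i, (b i / B) • (a i / b i) = A / B := by
    rw [hA, Finset.sum_div]
    congr 1 with i
    have hbi : (b i) ≠ 0 := (hb i).ne'
    have hB0 : B ≠ 0 := hBpos.ne'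
    rw [smul_eq_mul]
    field_simp
  rw [hsum] at hjensen
  calc B * g (A / B) ≤ B * ∑ i, (b i / B) • g (a i / b i) := by
        exact mul_le_mul_of_nonneg_left hjensen hBpos.le
    _ = ∑ i, b i * g (a i / b i) := by
        rw [Finset.mul_sum]
        congr 1 with i
        simp [smul_eq_mul]
        field_simp
    _ = ∑ i, a i * (a i / b i) ^ (r - k) * lnkr k r (a i / b i) := by
        exact Finset.sum_congr rfl (fun i _ => (hterm i).symm)
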